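/- Lower bound for the negative second Robin eigenvalue of the ball via Amos's inequality: let n ≥ 2, α < −1, and suppose y > 0 satisfies y·I_{n/2+1}(y)/I_{n/2}(y) = −(α+1). Then −y² ≥ −(α+1)² + (n+2)(α+1). -/

import Mathlib

/-- Modified Bessel function of the first kind. -/
noncomputable def besselI (ν x : ℝ) : ℝ :=
  ∑' k : ℕ, (x / 2) ^ (ν + 2 * (k : ℝ)) / (Nat.factorial k * Real.Gamma (ν + k + 1))

namespace RobinAux

noncomputable def bt (ν y : ℝ) (k : ℕ) : ℝ :=
  (y / 2) ^ (ν + 2 * (k : ℝ)) / (Nat.factorial k * Real.Gamma (ν + k + 1))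

lemma besselI_eq (ν y : ℝ) : besselI ν y = ∑' k, bt ν y k := rfl

lemma Gamma_ge_one {x : ℝ} (hx : 2 ≤ x) : 1 ≤ Real.Gamma x := by
  have h := Real.Gamma_strictMonoOn_Ici.monotoneOn (Set.mem_Ici.2 le_rfl)
    (Set.mem_Ici.2 hx) hx
  rwa [Real.Gamma_two] at h

lemma arg_ge {ν : ℝ} (hν : 1 ≤ ν) (k : ℕ) : 2 ≤ ν + k + 1 := by
  have : (0:ℝ) ≤ k := Nat.cast_nonneg k
  linarith

lemma bt_pos {ν y : ℝ} (hν : 1 ≤ ν) (hy : 0 < y) (k : ℕ) : 0 < bt ν y k := by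
  apply div_pos (Real.rpow_pos_of_pos (by linarith) _)
  exact mul_pos (by positivity) (Real.Gamma_pos_of_pos (by have := arg_ge hν k; linarith))

lemma bt_le {ν y : ℝ} (hν : 1 ≤ ν) (hy : 0 < y) (k : ℕ) :
    bt ν y k ≤ (y/2) ^ ν * (((y/2)^2) ^ k / (Nat.factorial k)) := by
  have hy2 : (0:ℝ) < y / 2 := by linarith
  have hnum : (y / 2) ^ (ν + 2 * (k : ℝ)) = (y/2) ^ ν * ((y/2)^2) ^ k := by
    rw [Real.rpow_add hy2]
    congr 1
    rw [show (2 * (k:ℝ)) = ((2 * k : ℕ) : ℝ) by push_cast; ring, Real.rpow_natCast, pow_mul]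
  rw [bt, hnum, mul_div_assoc]
  apply mul_le_mul_of_nonneg_left _ (le_of_lt (Real.rpow_pos_of_pos hy2 _))
  apply div_le_div_of_nonneg_left (by positivity) (by positivity)
  calc ((Nat.factorial k : ℝ)) = (Nat.factorial k : ℝ) * 1 := by ring
    _ ≤ (Nat.factorial k : ℝ) * Real.Gamma (ν + k + 1) := by
        apply mul_le_mul_of_nonneg_left (Gamma_ge_one (arg_ge hν k)) (by positivity)

lemma summable_bt {ν y : ℝ} (hν : 1 ≤ ν) (hy : 0 < y) : Summable (bt ν y) := by
  apply Summable.of_nonneg_of_le (fun k => (bt_pos hν hy k).le) (bt_le hν hy)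
  exact (Real.summable_pow_div_factorial ((y/2)^2)).mul_left _

lemma besselI_pos {ν y : ℝ} (hν : 1 ≤ ν) (hy : 0 < y) : 0 < besselI ν y := by
  rw [besselI_eq]
  exact Summable.tsum_pos (summable_bt hν hy) (fun k => (bt_pos hν hy k).le) 0 (bt_pos hν hy 0)

lemma bt_succ {ν y : ℝ} (hν : 1 ≤ ν) (hy : 0 < y) (k : ℕ) :
    bt (ν+1) y k = (y/2) / (ν + k + 1) * bt ν y k := by
  have hy2 : (0:ℝ) < y / 2 := by linarith
  have hk : (0:ℝ) ≤ k := Nat.cast_nonneg k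
  have hG : Real.Gamma ((ν+1) + k + 1) = (ν + k + 1) * Real.Gamma (ν + k + 1) := by
    rw [show (ν+1) + k + 1 = (ν + k + 1) + 1 by ring, Real.Gamma_add_one (by positivity)]
  have hnum : (y / 2) ^ ((ν+1) + 2 * (k : ℝ)) = (y/2) * (y / 2) ^ (ν + 2 * (k : ℝ)) := by
    rw [show (ν+1) + 2*(k:ℝ) = 1 + (ν + 2*(k:ℝ)) by ring, Real.rpow_add hy2, Real.rpow_one]
  rw [bt, bt, hG, hnum]
  have hGpos : 0 < Real.Gamma (ν + k + 1) := Real.Gamma_pos_of_pos (by positivity)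
  have hfpos : (0:ℝ) < Nat.factorial k := by positivity
  field_simp

lemma bt_rec {ν y : ℝ} (hν : 1 ≤ ν) (hy : 0 < y) (j : ℕ) :
    bt ν y (j+1) = (2*(ν+1)/y) * bt (ν+1) y (j+1) + bt (ν+2) y j := by
  have hy2 : (0:ℝ) < y / 2 := by linarith
  have hj : (0:ℝ) ≤ j := Nat.cast_nonneg j
  have hpos : (0:ℝ) < ν + (j:ℝ) + 2 := by linarith
  have hG : 0 < Real.Gamma (ν + (j:ℝ) + 2) := Real.Gamma_pos_of_pos hpos
  have e1 : Real.Gamma (ν + ((j:ℝ)+1) + 1) = Real.Gamma (ν + (j:ℝ) + 2) := by ring_nf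
  have e2 : Real.Gamma (ν + 1 + ((j:ℝ)+1) + 1) = (ν + (j:ℝ) + 2) * Real.Gamma (ν + (j:ℝ) + 2) := by
    rw [show (ν + 1 + ((j:ℝ)+1) + 1) = (ν + (j:ℝ) + 2) + 1 from by ring,
      Real.Gamma_add_one (by positivity)]
  have e3 : Real.Gamma (ν + 2 + (j:ℝ) + 1) = (ν + (j:ℝ) + 2) * Real.Gamma (ν + (j:ℝ) + 2) := by
    rw [show (ν + 2 + (j:ℝ) + 1) = (ν + (j:ℝ) + 2) + 1 from by ring,
      Real.Gamma_add_one (by positivity)]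
  have e4 : (y/2) ^ (ν + 1 + 2 * ((j:ℝ)+1)) = (y/2) * (y/2) ^ (ν + 2*((j:ℝ)+1)) := by
    rw [show (ν + 1 + 2 * ((j:ℝ)+1)) = 1 + (ν + 2*((j:ℝ)+1)) from by ring,
      Real.rpow_add hy2, Real.rpow_one]
  have e5 : (y/2) ^ (ν + 2 + 2 * (j:ℝ)) = (y/2) ^ (ν + 2*((j:ℝ)+1)) := by
    rw [show (ν + 2 + 2 * (j:ℝ)) = ν + 2*((j:ℝ)+1) from by ring]
  rw [bt, bt, bt]
  simp only [Nat.cast_succ, Nat.factorial_succ, Nat.cast_mul]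
  rw [e1, e2, e3, e4, e5]
  have hf : (0:ℝ) < (Nat.factorial j : ℝ) := by positivity
  have hXpos : (0:ℝ) < (y/2) ^ (ν + 2*((j:ℝ)+1)) := Real.rpow_pos_of_pos hy2 _
  field_simp
  ring

lemma besselI_succ_le {ν y : ℝ} (hν : 1 ≤ ν) (hy : 0 < y) :
    besselI (ν+1) y ≤ (y/2) / (ν+1) * besselI ν y := by
  rw [besselI_eq, besselI_eq, ← tsum_mul_left]
  apply Summable.tsum_le_tsum _ (summable_bt (by linarith) hy) ((summable_bt hν hy).mul_left _)
  intro k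
  rw [bt_succ hν hy k]
  apply mul_le_mul_of_nonneg_right _ (bt_pos hν hy k).le
  apply div_le_div_of_nonneg_left (by linarith) (by linarith)
  have : (0:ℝ) ≤ k := Nat.cast_nonneg k
  linarith

lemma recurrence {ν y : ℝ} (hν : 1 ≤ ν) (hy : 0 < y) :
    y * besselI ν y = 2*(ν+1) * besselI (ν+1) y + y * besselI (ν+2) y := by
  classical
  set s : ℕ → ℝ := fun k => Nat.casesOn k 0 (fun j => bt (ν+2) y j) with hs
  have hssucc : ∀ j : ℕ, s (j+1) = bt (ν+2) y j := fun j => rfl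
  have hsum1 : Summable (bt (ν+1) y) := summable_bt (by linarith) hy
  have hsum2 : Summable (bt (ν+2) y) := summable_bt (by linarith) hy
  have hsums : Summable s := by
    rw [← summable_nat_add_iff 1]
    simpa [hssucc] using hsum2
  have key : ∀ k, bt ν y k = (2*(ν+1)/y) * bt (ν+1) y k + s k := by
    intro k
    cases k with
    | zero =>
      show bt ν y 0 = (2*(ν+1)/y) * bt (ν+1) y 0 + 0
      rw [add_zero, bt_succ hν hy 0]
      have h0 : (ν + ((0:ℕ):ℝ) + 1) = ν + 1 := by push_cast; ring
      rw [h0]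
      field_simp
    | succ j =>
      rw [hssucc, bt_rec hν hy j]
  have hIs : (∑' k, s k) = besselI (ν+2) y := by
    rw [Summable.tsum_eq_zero_add hsums]
    simp only [hssucc]
    show 0 + (∑' j, bt (ν+2) y j) = besselI (ν+2) y
    rw [zero_add, besselI_eq]
  have : besselI ν y = (2*(ν+1)/y) * besselI (ν+1) y + besselI (ν+2) y := by
    rw [besselI_eq]
    calc (∑' k, bt ν y k) = ∑' k, ((2*(ν+1)/y) * bt (ν+1) y k + s k) := by
          exact tsum_congr key
      _ = (∑' k, (2*(ν+1)/y) * bt (ν+1) y k) + ∑' k, s k :=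
          Summable.tsum_add (hsum1.mul_left _) hsums
      _ = (2*(ν+1)/y) * besselI (ν+1) y + besselI (ν+2) y := by
          rw [tsum_mul_left, hIs, besselI_eq, besselI_eq]
  rw [this]
  field_simp

lemma base_upper {ν y : ℝ} (hν : 1 ≤ ν) (hy : 0 < y) (hb : y^2 ≤ 4*(ν+1)) :
    y * besselI (ν+1) y ≤ (Real.sqrt (y^2+ν^2) - ν) * besselI ν y := by
  set s0 := Real.sqrt (y^2+ν^2) with hs0
  have hs0sq : s0^2 = y^2+ν^2 := Real.sq_sqrt (by positivity)
  have hs0ge : ν ≤ s0 := by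
    rw [hs0, Real.le_sqrt (by linarith) (by positivity)]
    nlinarith
  have hs0le : s0 ≤ ν + 2 := by
    rw [hs0, show ν + 2 = Real.sqrt ((ν+2)^2) from (Real.sqrt_sq (by linarith)).symm]
    apply Real.sqrt_le_sqrt
    nlinarith
  have hIpos : 0 < besselI ν y := besselI_pos hν hy
  have h1 : y * besselI (ν+1) y ≤ y * ((y/2)/(ν+1) * besselI ν y) :=
    mul_le_mul_of_nonneg_left (besselI_succ_le hν hy) hy.le
  have hne : (ν:ℝ) + 1 ≠ 0 := by linarith
  have hscal : y * ((y/2)/(ν+1)) ≤ s0 - ν := by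
    rw [show y * ((y/2)/(ν+1)) = y^2/(2*(ν+1)) from by field_simp,
      div_le_iff₀ (by linarith : (0:ℝ) < 2*(ν+1))]
    nlinarith [mul_le_mul_of_nonneg_left (show s0+ν ≤ 2*(ν+1) from by linarith)
      (sub_nonneg.2 hs0ge)]
  have h3 : y * ((y/2)/(ν+1) * besselI ν y) ≤ (s0 - ν) * besselI ν y := by
    calc y * ((y/2)/(ν+1) * besselI ν y) = (y * ((y/2)/(ν+1))) * besselI ν y := by ring
      _ ≤ (s0 - ν) * besselI ν y := mul_le_mul_of_nonneg_right hscal hIpos.le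
  linarith

lemma base_lower {ν y : ℝ} (hν : 1 ≤ ν) (hy : 0 < y) (hb : y^2 ≤ 4*(ν+1)) :
    (Real.sqrt (y^2+(ν+1)^2) - (ν+1)) * besselI ν y ≤ y * besselI (ν+1) y := by
  set s1 := Real.sqrt (y^2+(ν+1)^2) with hs1
  have hs1sq : s1^2 = y^2+(ν+1)^2 := Real.sq_sqrt (by positivity)
  have hIpos : 0 < besselI ν y := besselI_pos hν hy
  have hI1pos : 0 < besselI (ν+1) y := besselI_pos (by linarith) hy
  have hrec : y * besselI ν y = 2*(ν+1) * besselI (ν+1) y + y * besselI (ν+2) y :=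
    recurrence hν hy
  have hB : besselI (ν+1+1) y ≤ (y/2)/(ν+1+1) * besselI (ν+1) y :=
    besselI_succ_le (by linarith) hy
  set q := y^2/(2*(ν+2)) with hqdef
  have hq : q * (2*(ν+2)) = y^2 := by
    rw [hqdef]; field_simp
  have hqnn : 0 ≤ q := by positivity
  have hA : y * besselI ν y ≤ (2*(ν+1) + q) * besselI (ν+1) y := by
    have : y * besselI (ν+1+1) y ≤ y * ((y/2)/(ν+1+1) * besselI (ν+1) y) :=
      mul_le_mul_of_nonneg_left hB hy.le
    have he : y * ((y/2)/(ν+1+1) * besselI (ν+1) y) = q * besselI (ν+1) y := by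
      rw [hqdef]; field_simp; ring
    rw [he] at this
    have : y * besselI (ν+2) y ≤ q * besselI (ν+1) y := by
      rw [show ν + 2 = ν + 1 + 1 from by ring]; exact this
    nlinarith
  have hs1ge : (ν+1) + q ≤ s1 := by
    rw [hs1, Real.le_sqrt (by linarith) (by positivity)]
    nlinarith
  have hnn : 0 ≤ s1 - (ν+1) := by nlinarith
  have hmul : (s1 - (ν+1)) * (y * besselI ν y) ≤ y^2 * besselI (ν+1) y := by
    calc (s1 - (ν+1)) * (y * besselI ν y)
        ≤ (s1 - (ν+1)) * ((2*(ν+1) + q) * besselI (ν+1) y) :=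
          mul_le_mul_of_nonneg_left hA hnn
      _ ≤ (s1 - (ν+1)) * ((s1 + (ν+1)) * besselI (ν+1) y) := by
          apply mul_le_mul_of_nonneg_left _ hnn
          apply mul_le_mul_of_nonneg_right _ hI1pos.le
          linarith
      _ = (s1^2 - (ν+1)^2) * besselI (ν+1) y := by ring
      _ = y^2 * besselI (ν+1) y := by rw [hs1sq]; ring
  have := mul_le_mul_of_nonneg_left hmul (le_of_lt (inv_pos.2 hy))
  calc (s1 - (ν+1)) * besselI ν y
      = y⁻¹ * ((s1 - (ν+1)) * (y * besselI ν y)) := by field_simp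
    _ ≤ y⁻¹ * (y^2 * besselI (ν+1) y) := this
    _ = y * besselI (ν+1) y := by field_simp

lemma step_bounds {ν y : ℝ} (hν : 1 ≤ ν) (hy : 0 < y)
    (hU : y * besselI (ν+1+1) y ≤ (Real.sqrt (y^2+(ν+1)^2) - (ν+1)) * besselI (ν+1) y)
    (hL : (Real.sqrt (y^2+(ν+1+1)^2) - (ν+1+1)) * besselI (ν+1) y ≤ y * besselI (ν+1+1) y) :
    y * besselI (ν+1) y ≤ (Real.sqrt (y^2+ν^2) - ν) * besselI ν y
      ∧ (Real.sqrt (y^2+(ν+1)^2) - (ν+1)) * besselI ν y ≤ y * besselI (ν+1) y := by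
  set s0 := Real.sqrt (y^2+ν^2) with hs0
  set s1 := Real.sqrt (y^2+(ν+1)^2) with hs1
  set s2 := Real.sqrt (y^2+(ν+1+1)^2) with hs2
  have hs0sq : s0^2 = y^2+ν^2 := Real.sq_sqrt (by positivity)
  have hs1sq : s1^2 = y^2+(ν+1)^2 := Real.sq_sqrt (by positivity)
  have hs0ge : ν ≤ s0 := by
    rw [hs0, Real.le_sqrt (by linarith) (by positivity)]; nlinarith
  have hs1ge : (ν+1) ≤ s1 := by
    rw [hs1, Real.le_sqrt (by linarith) (by positivity)]; nlinarith
  have hs02 : s0 ≤ s2 := by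
    rw [hs0, hs2]; apply Real.sqrt_le_sqrt; nlinarith
  have hIpos : 0 < besselI ν y := besselI_pos hν hy
  have hI1pos : 0 < besselI (ν+1) y := besselI_pos (by linarith) hy
  have hrec : y * besselI ν y = 2*(ν+1) * besselI (ν+1) y + y * besselI (ν+2) y :=
    recurrence hν hy
  have hrec' : y * besselI ν y = 2*(ν+1) * besselI (ν+1) y + y * besselI (ν+1+1) y := by
    rw [hrec, show ν + 2 = ν + 1 + 1 from by ring]
  constructor
  · -- upper bound, uses hL
    have hA : (ν + s0) * besselI (ν+1) y ≤ y * besselI ν y := by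
      have h1 : (ν + s2) * besselI (ν+1) y ≤ y * besselI ν y := by
        rw [hrec']; nlinarith
      have h2 : (ν + s0) * besselI (ν+1) y ≤ (ν + s2) * besselI (ν+1) y := by
        apply mul_le_mul_of_nonneg_right _ hI1pos.le; linarith
      linarith
    have hmul : y^2 * besselI (ν+1) y ≤ (s0 - ν) * (y * besselI ν y) := by
      calc y^2 * besselI (ν+1) y = (s0^2 - ν^2) * besselI (ν+1) y := by rw [hs0sq]; ring
        _ = (s0 - ν) * ((ν + s0) * besselI (ν+1) y) := by ring
        _ ≤ (s0 - ν) * (y * besselI ν y) :=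
            mul_le_mul_of_nonneg_left hA (by linarith)
    have := mul_le_mul_of_nonneg_left hmul (le_of_lt (inv_pos.2 hy))
    calc y * besselI (ν+1) y = y⁻¹ * (y^2 * besselI (ν+1) y) := by field_simp
      _ ≤ y⁻¹ * ((s0 - ν) * (y * besselI ν y)) := this
      _ = (s0 - ν) * besselI ν y := by field_simp
  · -- lower bound, uses hU
    have hA : y * besselI ν y ≤ (s1 + (ν+1)) * besselI (ν+1) y := by
      rw [hrec']; nlinarith
    have hmul : (s1 - (ν+1)) * (y * besselI ν y) ≤ y^2 * besselI (ν+1) y := by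
      calc (s1 - (ν+1)) * (y * besselI ν y)
          ≤ (s1 - (ν+1)) * ((s1 + (ν+1)) * besselI (ν+1) y) :=
            mul_le_mul_of_nonneg_left hA (by linarith)
        _ = (s1^2 - (ν+1)^2) * besselI (ν+1) y := by ring
        _ = y^2 * besselI (ν+1) y := by rw [hs1sq]; ring
    have := mul_le_mul_of_nonneg_left hmul (le_of_lt (inv_pos.2 hy))
    calc (s1 - (ν+1)) * besselI ν y
        = y⁻¹ * ((s1 - (ν+1)) * (y * besselI ν y)) := by field_simp
      _ ≤ y⁻¹ * (y^2 * besselI (ν+1) y) := this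
      _ = y * besselI (ν+1) y := by field_simp

lemma ratio_bounds {y : ℝ} (hy : 0 < y) :
    ∀ K : ℕ, ∀ ν : ℝ, 1 ≤ ν → y^2 ≤ 4*(ν+1) + 4*K →
      y * besselI (ν+1) y ≤ (Real.sqrt (y^2+ν^2) - ν) * besselI ν y
      ∧ (Real.sqrt (y^2+(ν+1)^2) - (ν+1)) * besselI ν y ≤ y * besselI (ν+1) y := by
  intro K
  induction K with
  | zero =>
    intro ν hν hb
    push_cast at hb
    exact ⟨base_upper hν hy (by linarith), base_lower hν hy (by linarith)⟩
  | succ k ih =>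
    intro ν hν hb
    by_cases hc : y^2 ≤ 4*(ν+1)
    · exact ⟨base_upper hν hy hc, base_lower hν hy hc⟩
    · have hb' : y^2 ≤ 4*((ν+1)+1) + 4*k := by push_cast at hb ⊢; linarith
      obtain ⟨hU, hL⟩ := ih (ν+1) (by linarith) hb'
      exact step_bounds hν hy hU hL

end RobinAux

theorem second_robin_eigenvalue_lower_bound (n : ℕ) (hn : 2 ≤ n) (α : ℝ) (hα : α < -1)
    (y : ℝ) (hy : 0 < y)
    (heq : y * besselI ((n : ℝ) / 2 + 1) y / besselI ((n : ℝ) / 2) y = -(α + 1)) :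
    -(α + 1) ^ 2 + (n + 2) * (α + 1) ≤ -y ^ 2 := by
  open RobinAux in
  set ν : ℝ := (n : ℝ) / 2 with hνdef
  have hν : 1 ≤ ν := by
    rw [hνdef]
    have : (2:ℝ) ≤ (n:ℝ) := by exact_mod_cast hn
    linarith
  have hbase : y^2 ≤ 4*(ν+1) + 4*(Nat.ceil (y^2) : ℕ) := by
    have h1 : y^2 ≤ (Nat.ceil (y^2) : ℝ) := Nat.le_ceil _
    have h2 : (0:ℝ) ≤ (Nat.ceil (y^2) : ℕ) := by positivity
    push_cast
    nlinarith
  obtain ⟨-, hL⟩ := RobinAux.ratio_bounds hy (Nat.ceil (y^2)) ν hν hbase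
  have hI0 : 0 < besselI ν y := RobinAux.besselI_pos hν hy
  set β : ℝ := -(α + 1) with hβdef
  have hβ : 0 < β := by rw [hβdef]; linarith
  have hIeq : y * besselI (ν+1) y = β * besselI ν y := by
    have := heq
    rw [div_eq_iff (ne_of_gt hI0)] at this
    exact this
  set c : ℝ := ν + 1 with hcdef
  set s : ℝ := Real.sqrt (y^2 + c^2) with hsdef
  have hsle : s - c ≤ β := by
    have h := hL
    rw [hIeq] at h
    exact le_of_mul_le_mul_right h hI0
  have hs0 : 0 ≤ s := Real.sqrt_nonneg _
  have hssq : s^2 = y^2 + c^2 := Real.sq_sqrt (by positivity)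
  have hy2 : y^2 ≤ β^2 + 2*c*β := by
    nlinarith [mul_nonneg (show (0:ℝ) ≤ β + c - s from by linarith)
      (show (0:ℝ) ≤ β + c + s from by nlinarith)]
  have h2c : 2*c = (n:ℝ) + 2 := by rw [hcdef, hνdef]; ring
  have hrw : -(α + 1) ^ 2 + ((n:ℝ) + 2) * (α + 1) = -(β^2) - ((n:ℝ)+2)*β := by
    rw [hβdef]; ring
  rw [hrw]
  nlinarith [hy2, h2c]
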